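/- If a sequence of events (e_i) admits a witnessing sequence of set states (D_i) for the state-based specification (D_0 = ∅ and each triple (D_i, e_i, D_{i+1}) complies with the transition table), then there exists a function γ on the Op¹ events satisfying FS1 and FS2. -/
import Mathlib


/-- Event type: Add, Rem, or Contains. -/
inductive EType | add | rem | cnt
deriving DecidableEq

/-- Status of an event: 0, 1, or f (failed). -/
inductive Status | s0 | s1 | sf
deriving DecidableEq

open EType Status

/-- The most recent Add⁰ event of key `k` strictly before time `i`. -/
def gfun (typ : ℕ → EType) (kval : ℕ → ℕ) (χ : ℕ → Status) : ℕ → ℕ → ℕ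
  | 0, _ => 0
  | (i+1), k => if typ i = add ∧ χ i = s0 ∧ kval i = k then i
                else gfun typ kval χ i k

/-- If a sequence of events admits a witnessing sequence of finite
set states (D_i) for the state-based specification (D 0 = ∅ and each triple
(D_i, e_i, D_{i+1}) complies with the transition table), then there exists a
function γ on the Op¹ events satisfying FS1 and FS2. -/
theorem stmt2
    (typ : ℕ → EType) (kval : ℕ → ℕ) (χ : ℕ → Status)
    (D : ℕ → Finset ℕ)
    (hD0 : D 0 = ∅)
    (hf : ∀ i, χ i = sf → D (i + 1) = D i)
    (hAdd0 : ∀ i, typ i = add → χ i = s0 →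
      kval i ∉ D i ∧ D (i + 1) = insert (kval i) (D i))
    (hAdd1 : ∀ i, typ i = add → χ i = s1 → kval i ∈ D i ∧ D (i + 1) = D i)
    (hRem0 : ∀ i, typ i = rem → χ i = s0 → kval i ∉ D i ∧ D (i + 1) = D i)
    (hRem1 : ∀ i, typ i = rem → χ i = s1 →
      kval i ∈ D i ∧ D (i + 1) = (D i).erase (kval i))
    (hCnt0 : ∀ i, typ i = cnt → χ i = s0 → kval i ∉ D i ∧ D (i + 1) = D i)
    (hCnt1 : ∀ i, typ i = cnt → χ i = s1 → kval i ∈ D i ∧ D (i + 1) = D i) :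
    ∃ γ : ℕ → ℕ,
      (∀ a, χ a = s1 →
        γ a < a ∧ typ (γ a) = add ∧ χ (γ a) = s0 ∧ kval (γ a) = kval a ∧
        ¬ ∃ r, typ r = rem ∧ χ r = s1 ∧ γ r = γ a ∧ γ a < r ∧ r < a) ∧
      (∀ a b, a < b → typ a = add → χ a = s0 → χ b = s0 → kval a = kval b →
        ∃ r, a < r ∧ r < b ∧ typ r = rem ∧ χ r = s1 ∧ γ r = a) := by
  set g := gfun typ kval χ with hg
  -- backwards membership step
  have hback : ∀ i k, k ∈ D (i+1) →
      ¬(typ i = add ∧ χ i = s0 ∧ kval i = k) → k ∈ D i := by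
    intro i k hk hn
    cases htyp : typ i <;> cases hχ : χ i
    · rcases hAdd0 i htyp hχ with ⟨-, hD⟩
      rw [hD, Finset.mem_insert] at hk
      rcases hk with h | h
      · exact absurd ⟨htyp, hχ, h.symm⟩ hn
      · exact h
    · rw [(hAdd1 i htyp hχ).2] at hk; exact hk
    · rw [hf i hχ] at hk; exact hk
    · rw [(hRem0 i htyp hχ).2] at hk; exact hk
    · rw [(hRem1 i htyp hχ).2] at hk; exact Finset.mem_of_mem_erase hk
    · rw [hf i hχ] at hk; exact hk
    · rw [(hCnt0 i htyp hχ).2] at hk; exact hk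
    · rw [(hCnt1 i htyp hχ).2] at hk; exact hk
    · rw [hf i hχ] at hk; exact hk
  -- main invariant
  have hInv : ∀ i k, k ∈ D i →
      typ (g i k) = add ∧ χ (g i k) = s0 ∧ kval (g i k) = k ∧ g i k < i ∧
      ∀ j, g i k ≤ j → j < i → k ∈ D (j+1) := by
    intro i
    induction i with
    | zero => intro k hk; rw [hD0] at hk; exact absurd hk (Finset.notMem_empty k)
    | succ i ih =>
      intro k hk
      by_cases hc : typ i = add ∧ χ i = s0 ∧ kval i = k
      · have hgi : g (i+1) k = i := by rw [hg]; simp [gfun, hc]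
        rw [hgi]
        refine ⟨hc.1, hc.2.1, hc.2.2, Nat.lt_succ_self i, ?_⟩
        intro j h1 h2
        have : j = i := le_antisymm (Nat.lt_succ_iff.mp h2) h1
        subst this; exact hk
      · have hgi : g (i+1) k = g i k := by rw [hg]; simp only [gfun, if_neg hc]
        have hki : k ∈ D i := hback i k hk hc
        obtain ⟨h1, h2, h3, h4, h5⟩ := ih k hki
        rw [hgi]
        refine ⟨h1, h2, h3, h4.trans (Nat.lt_succ_self i), ?_⟩
        intro j hj1 hj2
        rcases Nat.lt_succ_iff_lt_or_eq.mp hj2 with h | h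
        · exact h5 j hj1 h
        · subst h; exact hk
  -- membership at status 1
  have hmem1 : ∀ a, χ a = s1 → kval a ∈ D a := by
    intro a ha
    cases ht : typ a
    · exact (hAdd1 a ht ha).1
    · exact (hRem1 a ht ha).1
    · exact (hCnt1 a ht ha).1
  refine ⟨fun a => g a (kval a), ?_, ?_⟩
  · -- FS1
    intro a ha
    obtain ⟨h1, h2, h3, h4, h5⟩ := hInv a (kval a) (hmem1 a ha)
    refine ⟨h4, h1, h2, h3, ?_⟩
    rintro ⟨r, hrt, hrχ, hre', hr1', hr2⟩
    have hre : g r (kval r) = g a (kval a) := hre'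
    have hr1 : g a (kval a) < r := hr1'
    obtain ⟨hrm, hrD⟩ := hRem1 r hrt hrχ
    obtain ⟨-, -, h3r, -, -⟩ := hInv r (kval r) hrm
    have hkr : kval r = kval a := by rw [← h3r, hre, h3]
    have hmem : kval a ∈ D (r+1) := h5 r (le_of_lt hr1) hr2
    rw [hrD, ← hkr] at hmem
    exact (Finset.notMem_erase (kval r) (D r)) hmem
  · -- FS2
    intro a b hab hta hχa hχb hkab
    obtain ⟨hnotin, hDa⟩ := hAdd0 a hta hχa
    have hka1 : kval a ∈ D (a+1) := by rw [hDa]; exact Finset.mem_insert_self _ _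
    have hkb : kval a ∉ D b := by
      rw [hkab]
      cases htb : typ b
      · exact (hAdd0 b htb hχb).1
      · exact (hRem0 b htb hχb).1
      · exact (hCnt0 b htb hχb).1
    have hex : ∃ m, a < m ∧ kval a ∉ D m := ⟨b, hab, hkb⟩
    classical
    set m := Nat.find hex with hm
    obtain ⟨hm1, hm2⟩ := Nat.find_spec hex
    have hmb : m ≤ b := Nat.find_le ⟨hab, hkb⟩
    have hmin : ∀ j, a < j → j < m → kval a ∈ D j := by
      intro j hj1 hj2
      by_contra hcon
      exact absurd ⟨hj1, hcon⟩ (Nat.find_min hex hj2)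
    have hm_ne : m ≠ a + 1 := by
      intro h; apply hm2; rw [← hm, h]; exact hka1
    have hm_ge : a + 2 ≤ m := by omega
    obtain ⟨r, hr⟩ : ∃ r, m = r + 1 := ⟨m - 1, by omega⟩
    have har : a < r := by omega
    have hrb : r < b := by omega
    have hkr : kval a ∈ D r := hmin r har (by omega)
    have hkr1 : kval a ∉ D (r+1) := by rw [← hr]; exact hm2
    -- the transition at r must be Rem¹ of key kval a
    have hrem : typ r = rem ∧ χ r = s1 ∧ kval r = kval a := by
      cases htr : typ r <;> cases hχr : χ r
      · rcases hAdd0 r htr hχr with ⟨-, hD⟩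
        rw [hD] at hkr1
        exact absurd (Finset.mem_insert_of_mem hkr) hkr1
      · rw [(hAdd1 r htr hχr).2] at hkr1; exact absurd hkr hkr1
      · rw [hf r hχr] at hkr1; exact absurd hkr hkr1
      · rw [(hRem0 r htr hχr).2] at hkr1; exact absurd hkr hkr1
      · refine ⟨rfl, rfl, ?_⟩
        rw [(hRem1 r htr hχr).2, Finset.mem_erase] at hkr1
        push_neg at hkr1
        by_contra hne
        exact hkr1 (fun he => hne he.symm) hkr
      · rw [hf r hχr] at hkr1; exact absurd hkr hkr1
      · rw [(hCnt0 r htr hχr).2] at hkr1; exact absurd hkr hkr1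
      · rw [(hCnt1 r htr hχr).2] at hkr1; exact absurd hkr hkr1
      · rw [hf r hχr] at hkr1; exact absurd hkr hkr1
    obtain ⟨hrt, hrχ, hrk⟩ := hrem
    -- g j (kval a) = a for a < j ≤ r
    have hgstable : ∀ j, a < j → j ≤ r → g j (kval a) = a := by
      intro j
      induction j with
      | zero => omega
      | succ j ih2 =>
        intro hj1 hj2
        by_cases hja : j = a
        · subst hja
          rw [hg]; simp [gfun, hta, hχa]
        · have hja' : a < j := by omega
          have hjr : j ≤ r := by omega
          have hjm : kval a ∈ D j := hmin j hja' (by omega)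
          have hnc : ¬(typ j = add ∧ χ j = s0 ∧ kval j = kval a) := by
            rintro ⟨h1', h2', h3'⟩
            exact (hAdd0 j h1' h2').1 (h3' ▸ hjm)
          rw [hg]; simp only [gfun, if_neg hnc]
          exact ih2 hja' (by omega)
    refine ⟨r, har, hrb, hrt, hrχ, ?_⟩
    show g r (kval r) = a
    rw [hrk]
    exact hgstable r har le_rfl
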